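/- For every sufficiently small α > 0 there exists n0 ∈ ℕ such that the following holds for all n ≥ n0 with n ≡ 0 (mod 3). Let H be a 4-partite 4-graph with vertex classes V1, V2, V3, V4, each of size n, on the same vertex set as H'_{1,3}(n) (for a fixed choice of the partition sets Wi ⊆ Vi, i = 2, 3, 4). If every vertex of H is α-good with respect to H'_{1,3}(n), then H has a perfect matching. -/

import Mathlib

open Finset

/-- `E` is the edge set of a 4-partite 4-graph with classes `V1, V2, V3, V4`. -/
def IsPartite4 {α : Type} [DecidableEq α] (V1 V2 V3 V4 : Finset α)
    (E : Finset (Finset α)) : Prop :=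
  ∀ e ∈ E, e ⊆ V1 ∪ V2 ∪ V3 ∪ V4 ∧ (e ∩ V1).card = 1 ∧ (e ∩ V2).card = 1 ∧
    (e ∩ V3).card = 1 ∧ (e ∩ V4).card = 1

/-- The edge set of `H'₁,₃(n)` for the choice `W2, W3, W4` of the partition
sets: all quadruples with one vertex in each class that meet `W2 ∪ W3 ∪ W4`
and meet `(V2 \ W2) ∪ (V3 \ W3) ∪ (V4 \ W4)`. -/
def H13edges {α : Type} [DecidableEq α] (V1 V2 V3 V4 W2 W3 W4 : Finset α) :
    Finset (Finset α) :=
  (V1 ∪ V2 ∪ V3 ∪ V4).powerset.filter (fun e =>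
    (e ∩ V1).card = 1 ∧ (e ∩ V2).card = 1 ∧ (e ∩ V3).card = 1 ∧
    (e ∩ V4).card = 1 ∧ (e ∩ (W2 ∪ W3 ∪ W4)).Nonempty ∧
    (e ∩ ((V2 \ W2) ∪ (V3 \ W3) ∪ (V4 \ W4))).Nonempty)

/-- The neighbourhood of a vertex `v` in a 4-graph with vertex set `V` and edge
set `E`: the 3-element sets `T ⊆ V` with `T ∪ {v} ∈ E`. -/
def nbrs {α : Type} [DecidableEq α] (V : Finset α) (E : Finset (Finset α))
    (v : α) : Finset (Finset α) :=
  V.powerset.filter (fun T => T.card = 3 ∧ insert v T ∈ E)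

set_option linter.unusedSectionVars false
set_option maxHeartbeats 1000000

namespace PMaux

variable {α : Type} [DecidableEq α]

abbrev Tup (α : Type) := α × α × α × α

def c1 (t : Tup α) : α := t.1
def c2 (t : Tup α) : α := t.2.1
def c3 (t : Tup α) : α := t.2.2.1
def c4 (t : Tup α) : α := t.2.2.2

structure IsM (X1 X2 X3 X4 : Finset α) (R : α → α → α → α → Prop)
    (M : Finset (Tup α)) : Prop where
  mem : ∀ t ∈ M, c1 t ∈ X1 ∧ c2 t ∈ X2 ∧ c3 t ∈ X3 ∧ c4 t ∈ X4 ∧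
    R (c1 t) (c2 t) (c3 t) (c4 t)
  i1 : ∀ t ∈ M, ∀ t' ∈ M, c1 t = c1 t' → t = t'
  i2 : ∀ t ∈ M, ∀ t' ∈ M, c2 t = c2 t' → t = t'
  i3 : ∀ t ∈ M, ∀ t' ∈ M, c3 t = c3 t' → t = t'
  i4 : ∀ t ∈ M, ∀ t' ∈ M, c4 t = c4 t' → t = t'

lemma inj_aug {β : Type} [DecidableEq β] (p : β → α) (M0 : Finset β) (n1 n2 n3 n4 : β)
    (h0 : ∀ t ∈ M0, ∀ t' ∈ M0, p t = p t' → t = t')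
    (d12 : p n1 ≠ p n2) (d13 : p n1 ≠ p n3) (d14 : p n1 ≠ p n4)
    (d23 : p n2 ≠ p n3) (d24 : p n2 ≠ p n4) (d34 : p n3 ≠ p n4)
    (hn1 : ∀ t ∈ M0, p t ≠ p n1) (hn2 : ∀ t ∈ M0, p t ≠ p n2)
    (hn3 : ∀ t ∈ M0, p t ≠ p n3) (hn4 : ∀ t ∈ M0, p t ≠ p n4) :
    ∀ t ∈ insert n1 (insert n2 (insert n3 (insert n4 M0))),
      ∀ t' ∈ insert n1 (insert n2 (insert n3 (insert n4 M0))), p t = p t' → t = t' := by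
  intro t ht t' ht' h
  simp only [Finset.mem_insert] at ht ht'
  rcases ht with rfl|rfl|rfl|rfl|ht <;> rcases ht' with rfl|rfl|rfl|rfl|ht' <;>
    first
      | rfl
      | exact h0 _ ht _ ht' h
      | exact absurd h d12 | exact absurd h d13 | exact absurd h d14
      | exact absurd h d23 | exact absurd h d24 | exact absurd h d34
      | exact absurd h.symm d12 | exact absurd h.symm d13 | exact absurd h.symm d14
      | exact absurd h.symm d23 | exact absurd h.symm d24 | exact absurd h.symm d34
      | exact absurd h (hn1 _ ht) | exact absurd h (hn2 _ ht)
      | exact absurd h (hn3 _ ht) | exact absurd h (hn4 _ ht)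
      | exact absurd h.symm (hn1 _ ht') | exact absurd h.symm (hn2 _ ht')
      | exact absurd h.symm (hn3 _ ht') | exact absurd h.symm (hn4 _ ht')

lemma inj_one {β : Type} [DecidableEq β] (p : β → α) (M0 : Finset β) (n : β)
    (h0 : ∀ t ∈ M0, ∀ t' ∈ M0, p t = p t' → t = t')
    (hn : ∀ t ∈ M0, p t ≠ p n) :
    ∀ t ∈ insert n M0, ∀ t' ∈ insert n M0, p t = p t' → t = t' := by
  intro t ht t' ht' h
  simp only [Finset.mem_insert] at ht ht'
  rcases ht with rfl|ht <;> rcases ht' with rfl|ht'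
  · rfl
  · exact absurd h.symm (hn _ ht')
  · exact absurd h (hn _ ht)
  · exact h0 _ ht _ ht' h

lemma coord_facts (p : Tup α → α) (M : Finset (Tup α))
    (hi : ∀ t ∈ M, ∀ t' ∈ M, p t = p t' → t = t') (x : α) (hx : x ∉ M.image p)
    (e f g : Tup α) (he : e ∈ M) (hf : f ∈ M) (hg : g ∈ M)
    (hef : e ≠ f) (heg : e ≠ g) (hfg : f ≠ g) :
    (x ≠ p e ∧ x ≠ p f ∧ x ≠ p g ∧ p e ≠ p f ∧ p e ≠ p g ∧ p f ≠ p g) ∧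
      ∀ t ∈ ((M.erase e).erase f).erase g,
        p t ≠ x ∧ p t ≠ p e ∧ p t ≠ p f ∧ p t ≠ p g := by
  have hxe : ∀ u ∈ M, x ≠ p u := by
    intro u hu h
    exact hx (h ▸ Finset.mem_image_of_mem p hu)
  refine ⟨⟨hxe e he, hxe f hf, hxe g hg,
    fun h => hef (hi e he f hf h), fun h => heg (hi e he g hg h),
    fun h => hfg (hi f hf g hg h)⟩, ?_⟩
  intro t ht
  simp only [Finset.mem_erase] at ht
  obtain ⟨htg, htf, hte, htM⟩ := ht
  exact ⟨fun h => hxe t htM h.symm,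
    fun h => hte (hi t htM e he h),
    fun h => htf (hi t htM f hf h),
    fun h => htg (hi t htM g hg h)⟩

end PMaux

namespace PMaux

variable {α : Type} [DecidableEq α]

theorem augment (X1 X2 X3 X4 : Finset α) (R : α → α → α → α → Prop)
    [∀ a b c d : α, Decidable (R a b c d)] (m : ℕ) (hm : 100 ≤ m)
    (hc1 : X1.card = m) (hc2 : X2.card = m) (hc3 : X3.card = m) (hc4 : X4.card = m)
    (hdeg1 : ∀ v ∈ X1,
      1000 * ((X2 ×ˢ X3 ×ˢ X4).filter (fun t => ¬ R v t.1 t.2.1 t.2.2)).card ≤ m ^ 3)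
    (hdeg2 : ∀ v ∈ X2,
      1000 * ((X1 ×ˢ X3 ×ˢ X4).filter (fun t => ¬ R t.1 v t.2.1 t.2.2)).card ≤ m ^ 3)
    (hdeg3 : ∀ v ∈ X3,
      1000 * ((X1 ×ˢ X2 ×ˢ X4).filter (fun t => ¬ R t.1 t.2.1 v t.2.2)).card ≤ m ^ 3)
    (hdeg4 : ∀ v ∈ X4,
      1000 * ((X1 ×ˢ X2 ×ˢ X3).filter (fun t => ¬ R t.1 t.2.1 t.2.2 v)).card ≤ m ^ 3)
    (M : Finset (Tup α)) (hM : IsM X1 X2 X3 X4 R M) (hk : M.card < m) :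
    ∃ M', IsM X1 X2 X3 X4 R M' ∧ M'.card = M.card + 1 := by
  have himg1 : M.image c1 ⊆ X1 := by
    intro x hx; obtain ⟨t, ht, rfl⟩ := Finset.mem_image.mp hx; exact (hM.mem t ht).1
  have himg2 : M.image c2 ⊆ X2 := by
    intro x hx; obtain ⟨t, ht, rfl⟩ := Finset.mem_image.mp hx; exact (hM.mem t ht).2.1
  have himg3 : M.image c3 ⊆ X3 := by
    intro x hx; obtain ⟨t, ht, rfl⟩ := Finset.mem_image.mp hx; exact (hM.mem t ht).2.2.1
  have himg4 : M.image c4 ⊆ X4 := by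
    intro x hx; obtain ⟨t, ht, rfl⟩ := Finset.mem_image.mp hx; exact (hM.mem t ht).2.2.2.1
  have hci1 : (M.image c1).card = M.card :=
    Finset.card_image_of_injOn (fun t ht t' ht' h => hM.i1 t ht t' ht' h)
  have hci2 : (M.image c2).card = M.card :=
    Finset.card_image_of_injOn (fun t ht t' ht' h => hM.i2 t ht t' ht' h)
  have hci3 : (M.image c3).card = M.card :=
    Finset.card_image_of_injOn (fun t ht t' ht' h => hM.i3 t ht t' ht' h)
  have hci4 : (M.image c4).card = M.card :=
    Finset.card_image_of_injOn (fun t ht t' ht' h => hM.i4 t ht t' ht' h)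
  have hA1 : (X1 \ M.image c1).card = m - M.card := by
    rw [Finset.card_sdiff_of_subset himg1, hci1, hc1]
  have hA2 : (X2 \ M.image c2).card = m - M.card := by
    rw [Finset.card_sdiff_of_subset himg2, hci2, hc2]
  have hA3 : (X3 \ M.image c3).card = m - M.card := by
    rw [Finset.card_sdiff_of_subset himg3, hci3, hc3]
  have hA4 : (X4 \ M.image c4).card = m - M.card := by
    rw [Finset.card_sdiff_of_subset himg4, hci4, hc4]
  obtain ⟨x1, hx1⟩ : (X1 \ M.image c1).Nonempty := by
    rw [← Finset.card_pos, hA1]; omega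
  obtain ⟨x2, hx2⟩ : (X2 \ M.image c2).Nonempty := by
    rw [← Finset.card_pos, hA2]; omega
  obtain ⟨x3, hx3⟩ : (X3 \ M.image c3).Nonempty := by
    rw [← Finset.card_pos, hA3]; omega
  obtain ⟨x4, hx4⟩ : (X4 \ M.image c4).Nonempty := by
    rw [← Finset.card_pos, hA4]; omega
  obtain ⟨hx1X, hx1i⟩ := Finset.mem_sdiff.mp hx1
  obtain ⟨hx2X, hx2i⟩ := Finset.mem_sdiff.mp hx2
  obtain ⟨hx3X, hx3i⟩ := Finset.mem_sdiff.mp hx3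
  obtain ⟨hx4X, hx4i⟩ := Finset.mem_sdiff.mp hx4
  by_cases hext : ∃ a1 ∈ X1 \ M.image c1, ∃ a2 ∈ X2 \ M.image c2,
      ∃ a3 ∈ X3 \ M.image c3, ∃ a4 ∈ X4 \ M.image c4, R a1 a2 a3 a4
  · -- direct extension
    obtain ⟨a1, ha1, a2, ha2, a3, ha3, a4, ha4, hR⟩ := hext
    obtain ⟨ha1X, ha1i⟩ := Finset.mem_sdiff.mp ha1
    obtain ⟨ha2X, ha2i⟩ := Finset.mem_sdiff.mp ha2
    obtain ⟨ha3X, ha3i⟩ := Finset.mem_sdiff.mp ha3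
    obtain ⟨ha4X, ha4i⟩ := Finset.mem_sdiff.mp ha4
    have hfresh1 : ∀ t ∈ M, c1 t ≠ a1 := by
      intro t ht h; exact ha1i (h ▸ Finset.mem_image_of_mem c1 ht)
    have hfresh2 : ∀ t ∈ M, c2 t ≠ a2 := by
      intro t ht h; exact ha2i (h ▸ Finset.mem_image_of_mem c2 ht)
    have hfresh3 : ∀ t ∈ M, c3 t ≠ a3 := by
      intro t ht h; exact ha3i (h ▸ Finset.mem_image_of_mem c3 ht)
    have hfresh4 : ∀ t ∈ M, c4 t ≠ a4 := by
      intro t ht h; exact ha4i (h ▸ Finset.mem_image_of_mem c4 ht)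
    have hnotmem : (a1, a2, a3, a4) ∉ M := fun h => hfresh1 _ h rfl
    refine ⟨insert (a1, a2, a3, a4) M, ⟨?_, ?_, ?_, ?_, ?_⟩, ?_⟩
    · intro t ht
      rcases Finset.mem_insert.mp ht with rfl | ht
      · exact ⟨ha1X, ha2X, ha3X, ha4X, hR⟩
      · exact hM.mem t ht
    · exact inj_one c1 M _ hM.i1 hfresh1
    · exact inj_one c2 M _ hM.i2 hfresh2
    · exact inj_one c3 M _ hM.i3 hfresh3
    · exact inj_one c4 M _ hM.i4 hfresh4
    · exact Finset.card_insert_of_notMem hnotmem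
  · -- augmentation
    push_neg at hext
    -- deficiency bound
    have hsub : (X2 \ M.image c2) ×ˢ (X3 \ M.image c3) ×ˢ (X4 \ M.image c4) ⊆
        (X2 ×ˢ X3 ×ˢ X4).filter (fun t => ¬ R x1 t.1 t.2.1 t.2.2) := by
      intro t ht
      simp only [Finset.mem_product] at ht
      obtain ⟨h2, h3, h4⟩ := ht
      refine Finset.mem_filter.mpr ⟨?_, hext x1 hx1 t.1 h2 t.2.1 h3 t.2.2 h4⟩
      simp only [Finset.mem_product]
      exact ⟨Finset.mem_sdiff.mp h2 |>.1, Finset.mem_sdiff.mp h3 |>.1,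
        Finset.mem_sdiff.mp h4 |>.1⟩
    have hs3 : 1000 * ((m - M.card) * ((m - M.card) * (m - M.card))) ≤ m ^ 3 := by
      calc 1000 * ((m - M.card) * ((m - M.card) * (m - M.card)))
          = 1000 * ((X2 \ M.image c2) ×ˢ (X3 \ M.image c3) ×ˢ (X4 \ M.image c4)).card := by
            simp [Finset.card_product, hA2, hA3, hA4]
        _ ≤ 1000 * ((X2 ×ˢ X3 ×ˢ X4).filter (fun t => ¬ R x1 t.1 t.2.1 t.2.2)).card := by
            exact Nat.mul_le_mul_left _ (Finset.card_le_card hsub)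
        _ ≤ m ^ 3 := hdeg1 x1 hx1X
    have h9m : 9 * m ≤ 10 * M.card := by
      by_contra hcon
      push_neg at hcon
      have h10 : m < 10 * (m - M.card) := by omega
      have := Nat.pow_lt_pow_left h10 (n := 3) (by norm_num)
      have hexp : (10 * (m - M.card)) ^ 3
          = 1000 * ((m - M.card) * ((m - M.card) * (m - M.card))) := by ring
      omega
    have h90 : 90 ≤ M.card := by omega
    -- good triple existence
    obtain ⟨p, hpO, hp⟩ :
        ∃ p ∈ M ×ˢ M ×ˢ M, p.1 ≠ p.2.1 ∧ p.1 ≠ p.2.2 ∧ p.2.1 ≠ p.2.2 ∧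
          R x1 (c2 p.1) (c3 p.2.1) (c4 p.2.2) ∧
          R (c1 p.1) x2 (c3 p.2.2) (c4 p.2.1) ∧
          R (c1 p.2.1) (c2 p.2.2) x3 (c4 p.1) ∧
          R (c1 p.2.2) (c2 p.2.1) (c3 p.1) x4 := by
      by_contra hno
      push_neg at hno
      set Om := M ×ˢ M ×ˢ M with hOm
      set D1 := Om.filter (fun p => p.1 = p.2.1) with hD1
      set D2 := Om.filter (fun p => p.1 = p.2.2) with hD2
      set D3 := Om.filter (fun p => p.2.1 = p.2.2) with hD3
      set B1 := Om.filter (fun p => ¬ R x1 (c2 p.1) (c3 p.2.1) (c4 p.2.2)) with hB1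
      set B2 := Om.filter (fun p => ¬ R (c1 p.1) x2 (c3 p.2.2) (c4 p.2.1)) with hB2
      set B3 := Om.filter (fun p => ¬ R (c1 p.2.1) (c2 p.2.2) x3 (c4 p.1)) with hB3
      set B4 := Om.filter (fun p => ¬ R (c1 p.2.2) (c2 p.2.1) (c3 p.1) x4) with hB4
      have hcover : Om ⊆ D1 ∪ D2 ∪ D3 ∪ B1 ∪ B2 ∪ B3 ∪ B4 := by
        intro p hpm
        have := hno p hpm
        simp only [hD1, hD2, hD3, hB1, hB2, hB3, hB4, Finset.mem_union, Finset.mem_filter]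
        by_cases e1 : p.1 = p.2.1
        · tauto
        · by_cases e2 : p.1 = p.2.2
          · tauto
          · by_cases e3 : p.2.1 = p.2.2
            · tauto
            · have := this e1 e2 e3
              tauto
      have hmemO : ∀ p ∈ Om, p.1 ∈ M ∧ p.2.1 ∈ M ∧ p.2.2 ∈ M := by
        intro p hpm
        simp only [hOm, Finset.mem_product] at hpm
        exact ⟨hpm.1, hpm.2.1, hpm.2.2⟩
      have hOcard : Om.card = M.card * (M.card * M.card) := by
        simp [hOm, Finset.card_product]
      -- diagonal bounds
      have hDb1 : D1.card ≤ M.card * M.card := by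
        have : D1.card ≤ (M ×ˢ M).card := by
          apply Finset.card_le_card_of_injOn (fun p => (p.1, p.2.2))
          · intro p hpm
            have hpO := Finset.mem_filter.mp hpm |>.1
            have := hmemO p hpO
            simp only [Finset.mem_coe, Finset.mem_product]
            exact ⟨this.1, this.2.2⟩
          · intro p hpm q hqm hpq
            have hp' := Finset.mem_filter.mp hpm |>.2
            have hq' := Finset.mem_filter.mp hqm |>.2
            simp only [Prod.mk.injEq] at hpq
            obtain ⟨h1, h3⟩ := hpq
            have h2 : p.2.1 = q.2.1 := by rw [← hp', ← hq', h1]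
            exact Prod.ext h1 (Prod.ext h2 h3)
        simpa [Finset.card_product] using this
      have hDb2 : D2.card ≤ M.card * M.card := by
        have : D2.card ≤ (M ×ˢ M).card := by
          apply Finset.card_le_card_of_injOn (fun p => (p.1, p.2.1))
          · intro p hpm
            have hpO := Finset.mem_filter.mp hpm |>.1
            have := hmemO p hpO
            simp only [Finset.mem_coe, Finset.mem_product]
            exact ⟨this.1, this.2.1⟩
          · intro p hpm q hqm hpq
            have hp' := Finset.mem_filter.mp hpm |>.2
            have hq' := Finset.mem_filter.mp hqm |>.2
            simp only [Prod.mk.injEq] at hpq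
            obtain ⟨h1, h2⟩ := hpq
            have h3 : p.2.2 = q.2.2 := by rw [← hp', ← hq', h1]
            exact Prod.ext h1 (Prod.ext h2 h3)
        simpa [Finset.card_product] using this
      have hDb3 : D3.card ≤ M.card * M.card := by
        have : D3.card ≤ (M ×ˢ M).card := by
          apply Finset.card_le_card_of_injOn (fun p => (p.1, p.2.1))
          · intro p hpm
            have hpO := Finset.mem_filter.mp hpm |>.1
            have := hmemO p hpO
            simp only [Finset.mem_coe, Finset.mem_product]
            exact ⟨this.1, this.2.1⟩
          · intro p hpm q hqm hpq
            have hp' := Finset.mem_filter.mp hpm |>.2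
            have hq' := Finset.mem_filter.mp hqm |>.2
            simp only [Prod.mk.injEq] at hpq
            obtain ⟨h1, h2⟩ := hpq
            have h3 : p.2.2 = q.2.2 := by rw [← hp', ← hq', h2]
            exact Prod.ext h1 (Prod.ext h2 h3)
        simpa [Finset.card_product] using this
      -- bad bounds
      have hBb1 : 1000 * B1.card ≤ m ^ 3 := by
        have hle : B1.card ≤
            ((X2 ×ˢ X3 ×ˢ X4).filter (fun t => ¬ R x1 t.1 t.2.1 t.2.2)).card := by
          apply Finset.card_le_card_of_injOn (fun p => (c2 p.1, c3 p.2.1, c4 p.2.2))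
          · intro p hpm
            obtain ⟨hpO, hcond⟩ := Finset.mem_filter.mp hpm
            obtain ⟨hm1, hm2, hm3⟩ := hmemO p hpO
            refine Finset.mem_filter.mpr ⟨?_, hcond⟩
            simp only [Finset.mem_product]
            exact ⟨(hM.mem _ hm1).2.1, (hM.mem _ hm2).2.2.1, (hM.mem _ hm3).2.2.2.1⟩
          · intro p hpm q hqm hpq
            obtain ⟨hpO, _⟩ := Finset.mem_filter.mp hpm
            obtain ⟨hqO, _⟩ := Finset.mem_filter.mp hqm
            obtain ⟨hp1, hp2, hp3⟩ := hmemO p hpO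
            obtain ⟨hq1, hq2, hq3⟩ := hmemO q hqO
            simp only [Prod.mk.injEq] at hpq
            obtain ⟨e1, e2, e3⟩ : (c2 p.1 = c2 q.1) ∧ (c3 p.2.1 = c3 q.2.1) ∧ (c4 p.2.2 = c4 q.2.2) := hpq
            exact Prod.ext (hM.i2 _ hp1 _ hq1 e1)
              (Prod.ext (hM.i3 _ hp2 _ hq2 e2) (hM.i4 _ hp3 _ hq3 e3))
        calc 1000 * B1.card ≤ 1000 *
            ((X2 ×ˢ X3 ×ˢ X4).filter (fun t => ¬ R x1 t.1 t.2.1 t.2.2)).card :=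
              Nat.mul_le_mul_left _ hle
          _ ≤ m ^ 3 := hdeg1 x1 hx1X
      have hBb2 : 1000 * B2.card ≤ m ^ 3 := by
        have hle : B2.card ≤
            ((X1 ×ˢ X3 ×ˢ X4).filter (fun t => ¬ R t.1 x2 t.2.1 t.2.2)).card := by
          apply Finset.card_le_card_of_injOn (fun p => (c1 p.1, c3 p.2.2, c4 p.2.1))
          · intro p hpm
            obtain ⟨hpO, hcond⟩ := Finset.mem_filter.mp hpm
            obtain ⟨hm1, hm2, hm3⟩ := hmemO p hpO
            refine Finset.mem_filter.mpr ⟨?_, hcond⟩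
            simp only [Finset.mem_product]
            exact ⟨(hM.mem _ hm1).1, (hM.mem _ hm3).2.2.1, (hM.mem _ hm2).2.2.2.1⟩
          · intro p hpm q hqm hpq
            obtain ⟨hpO, _⟩ := Finset.mem_filter.mp hpm
            obtain ⟨hqO, _⟩ := Finset.mem_filter.mp hqm
            obtain ⟨hp1, hp2, hp3⟩ := hmemO p hpO
            obtain ⟨hq1, hq2, hq3⟩ := hmemO q hqO
            simp only [Prod.mk.injEq] at hpq
            obtain ⟨e1, e2, e3⟩ : (c1 p.1 = c1 q.1) ∧ (c3 p.2.2 = c3 q.2.2) ∧ (c4 p.2.1 = c4 q.2.1) := hpq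
            exact Prod.ext (hM.i1 _ hp1 _ hq1 e1)
              (Prod.ext (hM.i4 _ hp2 _ hq2 e3) (hM.i3 _ hp3 _ hq3 e2))
        calc 1000 * B2.card ≤ 1000 *
            ((X1 ×ˢ X3 ×ˢ X4).filter (fun t => ¬ R t.1 x2 t.2.1 t.2.2)).card :=
              Nat.mul_le_mul_left _ hle
          _ ≤ m ^ 3 := hdeg2 x2 hx2X
      have hBb3 : 1000 * B3.card ≤ m ^ 3 := by
        have hle : B3.card ≤
            ((X1 ×ˢ X2 ×ˢ X4).filter (fun t => ¬ R t.1 t.2.1 x3 t.2.2)).card := by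
          apply Finset.card_le_card_of_injOn (fun p => (c1 p.2.1, c2 p.2.2, c4 p.1))
          · intro p hpm
            obtain ⟨hpO, hcond⟩ := Finset.mem_filter.mp hpm
            obtain ⟨hm1, hm2, hm3⟩ := hmemO p hpO
            refine Finset.mem_filter.mpr ⟨?_, hcond⟩
            simp only [Finset.mem_product]
            exact ⟨(hM.mem _ hm2).1, (hM.mem _ hm3).2.1, (hM.mem _ hm1).2.2.2.1⟩
          · intro p hpm q hqm hpq
            obtain ⟨hpO, _⟩ := Finset.mem_filter.mp hpm
            obtain ⟨hqO, _⟩ := Finset.mem_filter.mp hqm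
            obtain ⟨hp1, hp2, hp3⟩ := hmemO p hpO
            obtain ⟨hq1, hq2, hq3⟩ := hmemO q hqO
            simp only [Prod.mk.injEq] at hpq
            obtain ⟨e1, e2, e3⟩ : (c1 p.2.1 = c1 q.2.1) ∧ (c2 p.2.2 = c2 q.2.2) ∧ (c4 p.1 = c4 q.1) := hpq
            exact Prod.ext (hM.i4 _ hp1 _ hq1 e3)
              (Prod.ext (hM.i1 _ hp2 _ hq2 e1) (hM.i2 _ hp3 _ hq3 e2))
        calc 1000 * B3.card ≤ 1000 *
            ((X1 ×ˢ X2 ×ˢ X4).filter (fun t => ¬ R t.1 t.2.1 x3 t.2.2)).card :=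
              Nat.mul_le_mul_left _ hle
          _ ≤ m ^ 3 := hdeg3 x3 hx3X
      have hBb4 : 1000 * B4.card ≤ m ^ 3 := by
        have hle : B4.card ≤
            ((X1 ×ˢ X2 ×ˢ X3).filter (fun t => ¬ R t.1 t.2.1 t.2.2 x4)).card := by
          apply Finset.card_le_card_of_injOn (fun p => (c1 p.2.2, c2 p.2.1, c3 p.1))
          · intro p hpm
            obtain ⟨hpO, hcond⟩ := Finset.mem_filter.mp hpm
            obtain ⟨hm1, hm2, hm3⟩ := hmemO p hpO
            refine Finset.mem_filter.mpr ⟨?_, hcond⟩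
            simp only [Finset.mem_product]
            exact ⟨(hM.mem _ hm3).1, (hM.mem _ hm2).2.1, (hM.mem _ hm1).2.2.1⟩
          · intro p hpm q hqm hpq
            obtain ⟨hpO, _⟩ := Finset.mem_filter.mp hpm
            obtain ⟨hqO, _⟩ := Finset.mem_filter.mp hqm
            obtain ⟨hp1, hp2, hp3⟩ := hmemO p hpO
            obtain ⟨hq1, hq2, hq3⟩ := hmemO q hqO
            simp only [Prod.mk.injEq] at hpq
            obtain ⟨e1, e2, e3⟩ : (c1 p.2.2 = c1 q.2.2) ∧ (c2 p.2.1 = c2 q.2.1) ∧ (c3 p.1 = c3 q.1) := hpq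
            exact Prod.ext (hM.i3 _ hp1 _ hq1 e3)
              (Prod.ext (hM.i2 _ hp2 _ hq2 e2) (hM.i1 _ hp3 _ hq3 e1))
        calc 1000 * B4.card ≤ 1000 *
            ((X1 ×ˢ X2 ×ˢ X3).filter (fun t => ¬ R t.1 t.2.1 t.2.2 x4)).card :=
              Nat.mul_le_mul_left _ hle
          _ ≤ m ^ 3 := hdeg4 x4 hx4X
      -- sum up
      have hsum : Om.card ≤ D1.card + D2.card + D3.card + B1.card + B2.card
          + B3.card + B4.card := by
        refine le_trans (Finset.card_le_card hcover) ?_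
        refine le_trans (Finset.card_union_le _ _) ?_
        refine add_le_add ?_ le_rfl
        refine le_trans (Finset.card_union_le _ _) ?_
        refine add_le_add ?_ le_rfl
        refine le_trans (Finset.card_union_le _ _) ?_
        refine add_le_add ?_ le_rfl
        refine le_trans (Finset.card_union_le _ _) ?_
        refine add_le_add ?_ le_rfl
        refine le_trans (Finset.card_union_le _ _) ?_
        refine add_le_add ?_ le_rfl
        exact Finset.card_union_le _ _
      -- final arithmetic contradiction
      have h729 : 729 * m ^ 3 ≤ 1000 * (M.card * (M.card * M.card)) := by
        have := Nat.pow_le_pow_left h9m 3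
        calc 729 * m ^ 3 = (9 * m) ^ 3 := by ring
          _ ≤ (10 * M.card) ^ 3 := this
          _ = 1000 * (M.card * (M.card * M.card)) := by ring
      have hP2 : 90 * (M.card * M.card) ≤ M.card * (M.card * M.card) :=
        Nat.mul_le_mul_right _ h90
      have hP2pos : 1 ≤ M.card * M.card := Nat.one_le_iff_ne_zero.mpr (by positivity)
      rw [hOcard] at hsum
      set P3 := M.card * (M.card * M.card)
      set P2 := M.card * M.card
      set Q := m ^ 3
      omega
    -- build the augmented matching
    obtain ⟨e, f, g⟩ := p
    simp only [Finset.mem_product] at hpO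
    obtain ⟨he, hf, hg⟩ := hpO
    obtain ⟨hef, heg, hfg, hR1, hR2, hR3, hR4⟩ := hp
    have F1 := coord_facts c1 M hM.i1 x1 hx1i e f g he hf hg hef heg hfg
    have F2 := coord_facts c2 M hM.i2 x2 hx2i e f g he hf hg hef heg hfg
    have F3 := coord_facts c3 M hM.i3 x3 hx3i e f g he hf hg hef heg hfg
    have F4 := coord_facts c4 M hM.i4 x4 hx4i e f g he hf hg hef heg hfg
    set M0 := ((M.erase e).erase f).erase g with hM0def
    have hM0M : M0 ⊆ M :=
      (Finset.erase_subset _ _).trans ((Finset.erase_subset _ _).trans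
        (Finset.erase_subset _ _))
    set n1 : Tup α := (x1, c2 e, c3 f, c4 g) with hn1def
    set n2 : Tup α := (c1 e, x2, c3 g, c4 f) with hn2def
    set n3 : Tup α := (c1 f, c2 g, x3, c4 e) with hn3def
    set n4 : Tup α := (c1 g, c2 f, c3 e, x4) with hn4def
    refine ⟨insert n1 (insert n2 (insert n3 (insert n4 M0))), ⟨?_, ?_, ?_, ?_, ?_⟩, ?_⟩
    · intro t ht
      simp only [Finset.mem_insert] at ht
      rcases ht with rfl | rfl | rfl | rfl | ht
      · exact ⟨hx1X, (hM.mem e he).2.1, (hM.mem f hf).2.2.1, (hM.mem g hg).2.2.2.1, hR1⟩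
      · exact ⟨(hM.mem e he).1, hx2X, (hM.mem g hg).2.2.1, (hM.mem f hf).2.2.2.1, hR2⟩
      · exact ⟨(hM.mem f hf).1, (hM.mem g hg).2.1, hx3X, (hM.mem e he).2.2.2.1, hR3⟩
      · exact ⟨(hM.mem g hg).1, (hM.mem f hf).2.1, (hM.mem e he).2.2.1, hx4X, hR4⟩
      · exact hM.mem t (hM0M ht)
    · -- c1 values: x1, c1 e, c1 f, c1 g
      refine inj_aug c1 M0 n1 n2 n3 n4
        (fun t ht t' ht' h => hM.i1 t (hM0M ht) t' (hM0M ht') h)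
        F1.1.1 F1.1.2.1 F1.1.2.2.1 F1.1.2.2.2.1 F1.1.2.2.2.2.1 F1.1.2.2.2.2.2
        (fun t ht => (F1.2 t ht).1) (fun t ht => (F1.2 t ht).2.1)
        (fun t ht => (F1.2 t ht).2.2.1) (fun t ht => (F1.2 t ht).2.2.2)
    · -- c2 values: c2 e, x2, c2 g, c2 f
      refine inj_aug c2 M0 n1 n2 n3 n4
        (fun t ht t' ht' h => hM.i2 t (hM0M ht) t' (hM0M ht') h)
        (Ne.symm F2.1.1) F2.1.2.2.2.2.1 F2.1.2.2.2.1
        F2.1.2.2.1 F2.1.2.1 (Ne.symm F2.1.2.2.2.2.2)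
        (fun t ht => (F2.2 t ht).2.1) (fun t ht => (F2.2 t ht).1)
        (fun t ht => (F2.2 t ht).2.2.2) (fun t ht => (F2.2 t ht).2.2.1)
    · -- c3 values: c3 f, c3 g, x3, c3 e
      refine inj_aug c3 M0 n1 n2 n3 n4
        (fun t ht t' ht' h => hM.i3 t (hM0M ht) t' (hM0M ht') h)
        F3.1.2.2.2.2.2 (Ne.symm F3.1.2.1) (Ne.symm F3.1.2.2.2.1)
        (Ne.symm F3.1.2.2.1) (Ne.symm F3.1.2.2.2.2.1) F3.1.1
        (fun t ht => (F3.2 t ht).2.2.1) (fun t ht => (F3.2 t ht).2.2.2)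
        (fun t ht => (F3.2 t ht).1) (fun t ht => (F3.2 t ht).2.1)
    · -- c4 values: c4 g, c4 f, c4 e, x4
      refine inj_aug c4 M0 n1 n2 n3 n4
        (fun t ht t' ht' h => hM.i4 t (hM0M ht) t' (hM0M ht') h)
        (Ne.symm F4.1.2.2.2.2.2) (Ne.symm F4.1.2.2.2.2.1) (Ne.symm F4.1.2.2.1)
        (Ne.symm F4.1.2.2.2.1) (Ne.symm F4.1.2.1) (Ne.symm F4.1.1)
        (fun t ht => (F4.2 t ht).2.2.2) (fun t ht => (F4.2 t ht).2.2.1)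
        (fun t ht => (F4.2 t ht).2.1) (fun t ht => (F4.2 t ht).1)
    · -- cardinality
      have hfM : f ∈ M.erase e := Finset.mem_erase.mpr ⟨fun h => hef h.symm, hf⟩
      have hgM : g ∈ (M.erase e).erase f :=
        Finset.mem_erase.mpr ⟨fun h => hfg h.symm,
          Finset.mem_erase.mpr ⟨fun h => heg h.symm, hg⟩⟩
      have hM0card : M0.card = M.card - 3 := by
        rw [hM0def, Finset.card_erase_of_mem hgM, Finset.card_erase_of_mem hfM,
          Finset.card_erase_of_mem he]
        omega
      have hn4nm : n4 ∉ M0 := fun h => (F4.2 n4 h).1 rfl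
      have hn3nm : n3 ∉ insert n4 M0 := by
        simp only [Finset.mem_insert]
        rintro (h | h)
        · exact F3.1.1 (congrArg c3 h)
        · exact (F3.2 n3 h).1 rfl
      have hn2nm : n2 ∉ insert n3 (insert n4 M0) := by
        simp only [Finset.mem_insert]
        rintro (h | h | h)
        · exact F2.1.2.2.1 (congrArg c2 h)
        · exact F2.1.2.1 (congrArg c2 h)
        · exact (F2.2 n2 h).1 rfl
      have hn1nm : n1 ∉ insert n2 (insert n3 (insert n4 M0)) := by
        simp only [Finset.mem_insert]
        rintro (h | h | h | h)
        · exact F1.1.1 (congrArg c1 h)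
        · exact F1.1.2.1 (congrArg c1 h)
        · exact F1.1.2.2.1 (congrArg c1 h)
        · exact (F1.2 n1 h).1 rfl
      rw [Finset.card_insert_of_notMem hn1nm, Finset.card_insert_of_notMem hn2nm,
        Finset.card_insert_of_notMem hn3nm, Finset.card_insert_of_notMem hn4nm,
        hM0card]
      omega



theorem lemA (X1 X2 X3 X4 : Finset α) (R : α → α → α → α → Prop)
    [∀ a b c d : α, Decidable (R a b c d)] (m : ℕ) (hm : 100 ≤ m)
    (hc1 : X1.card = m) (hc2 : X2.card = m) (hc3 : X3.card = m) (hc4 : X4.card = m)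
    (hdeg1 : ∀ v ∈ X1,
      1000 * ((X2 ×ˢ X3 ×ˢ X4).filter (fun t => ¬ R v t.1 t.2.1 t.2.2)).card ≤ m ^ 3)
    (hdeg2 : ∀ v ∈ X2,
      1000 * ((X1 ×ˢ X3 ×ˢ X4).filter (fun t => ¬ R t.1 v t.2.1 t.2.2)).card ≤ m ^ 3)
    (hdeg3 : ∀ v ∈ X3,
      1000 * ((X1 ×ˢ X2 ×ˢ X4).filter (fun t => ¬ R t.1 t.2.1 v t.2.2)).card ≤ m ^ 3)
    (hdeg4 : ∀ v ∈ X4,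
      1000 * ((X1 ×ˢ X2 ×ˢ X3).filter (fun t => ¬ R t.1 t.2.1 t.2.2 v)).card ≤ m ^ 3) :
    ∃ M, IsM X1 X2 X3 X4 R M ∧ M.card = m := by
  have key : ∀ k, k ≤ m → ∃ M, IsM X1 X2 X3 X4 R M ∧ M.card = k := by
    intro k
    induction k with
    | zero => intro _
              exact ⟨∅, ⟨by simp, by simp, by simp, by simp, by simp⟩, rfl⟩
    | succ k ih =>
      intro hkm
      obtain ⟨M, hM, hc⟩ := ih (Nat.le_of_succ_le hkm)
      obtain ⟨M', hM', hc'⟩ := augment X1 X2 X3 X4 R m hm hc1 hc2 hc3 hc4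
        hdeg1 hdeg2 hdeg3 hdeg4 M hM (by omega)
      exact ⟨M', hM', by omega⟩
  exact key m le_rfl

theorem reduction (S1 S2 S3 S4 : Finset α) (E : Finset (Finset α)) (m : ℕ) (hm : 100 ≤ m)
    (d12 : Disjoint S1 S2) (d13 : Disjoint S1 S3) (d14 : Disjoint S1 S4)
    (d23 : Disjoint S2 S3) (d24 : Disjoint S2 S4) (d34 : Disjoint S3 S4)
    (hc1 : S1.card = m) (hc2 : S2.card = m) (hc3 : S3.card = m) (hc4 : S4.card = m)
    (hdeg1 : ∀ v ∈ S1, 1000 * ((S2 ×ˢ S3 ×ˢ S4).filter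
      (fun t => ({v, t.1, t.2.1, t.2.2} : Finset α) ∉ E)).card ≤ m ^ 3)
    (hdeg2 : ∀ v ∈ S2, 1000 * ((S1 ×ˢ S3 ×ˢ S4).filter
      (fun t => ({t.1, v, t.2.1, t.2.2} : Finset α) ∉ E)).card ≤ m ^ 3)
    (hdeg3 : ∀ v ∈ S3, 1000 * ((S1 ×ˢ S2 ×ˢ S4).filter
      (fun t => ({t.1, t.2.1, v, t.2.2} : Finset α) ∉ E)).card ≤ m ^ 3)
    (hdeg4 : ∀ v ∈ S4, 1000 * ((S1 ×ˢ S2 ×ˢ S3).filter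
      (fun t => ({t.1, t.2.1, t.2.2, v} : Finset α) ∉ E)).card ≤ m ^ 3) :
    ∃ M : Finset (Finset α), M ⊆ E ∧ (∀ e ∈ M, e ⊆ S1 ∪ S2 ∪ S3 ∪ S4) ∧
      (∀ e ∈ M, ∀ f ∈ M, e ≠ f → Disjoint e f) ∧
      (∀ v ∈ S1 ∪ S2 ∪ S3 ∪ S4, ∃ e ∈ M, v ∈ e) := by
  obtain ⟨Mt, hMt, hcard⟩ := lemA S1 S2 S3 S4
    (fun a b c d => ({a, b, c, d} : Finset α) ∈ E) m hm hc1 hc2 hc3 hc4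
    hdeg1 hdeg2 hdeg3 hdeg4
  set quad : Tup α → Finset α := fun t => {c1 t, c2 t, c3 t, c4 t} with hquad
  refine ⟨Mt.image quad, ?_, ?_, ?_, ?_⟩
  · intro e he
    obtain ⟨t, ht, rfl⟩ := Finset.mem_image.mp he
    exact (hMt.mem t ht).2.2.2.2
  · intro e he
    obtain ⟨t, ht, rfl⟩ := Finset.mem_image.mp he
    obtain ⟨m1, m2, m3, m4, _⟩ := hMt.mem t ht
    intro x hx
    simp only [hquad, Finset.mem_insert, Finset.mem_singleton] at hx
    simp only [Finset.mem_union]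
    rcases hx with rfl|rfl|rfl|rfl
    · tauto
    · tauto
    · tauto
    · tauto
  · intro e he f hf hne
    obtain ⟨t, ht, rfl⟩ := Finset.mem_image.mp he
    obtain ⟨t', ht', rfl⟩ := Finset.mem_image.mp hf
    rw [Finset.disjoint_left]
    intro v hv hv'
    obtain ⟨m1, m2, m3, m4, _⟩ := hMt.mem t ht
    obtain ⟨m1', m2', m3', m4', _⟩ := hMt.mem t' ht'
    simp only [hquad, Finset.mem_insert, Finset.mem_singleton] at hv hv'
    rcases hv with rfl|rfl|rfl|rfl <;> rcases hv' with h|h|h|h <;>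
      first
        | exact hne (congrArg quad (hMt.i1 t ht t' ht' h))
        | exact hne (congrArg quad (hMt.i2 t ht t' ht' h))
        | exact hne (congrArg quad (hMt.i3 t ht t' ht' h))
        | exact hne (congrArg quad (hMt.i4 t ht t' ht' h))
        | exact Finset.disjoint_left.mp d12 m1 (h.symm ▸ m2')
        | exact Finset.disjoint_left.mp d13 m1 (h.symm ▸ m3')
        | exact Finset.disjoint_left.mp d14 m1 (h.symm ▸ m4')
        | exact Finset.disjoint_left.mp d12.symm m2 (h.symm ▸ m1')
        | exact Finset.disjoint_left.mp d23 m2 (h.symm ▸ m3')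
        | exact Finset.disjoint_left.mp d24 m2 (h.symm ▸ m4')
        | exact Finset.disjoint_left.mp d13.symm m3 (h.symm ▸ m1')
        | exact Finset.disjoint_left.mp d23.symm m3 (h.symm ▸ m2')
        | exact Finset.disjoint_left.mp d34 m3 (h.symm ▸ m4')
        | exact Finset.disjoint_left.mp d14.symm m4 (h.symm ▸ m1')
        | exact Finset.disjoint_left.mp d24.symm m4 (h.symm ▸ m2')
        | exact Finset.disjoint_left.mp d34.symm m4 (h.symm ▸ m3')
  · have himg1 : Mt.image c1 = S1 := by
      apply Finset.eq_of_subset_of_card_le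
      · intro x hx; obtain ⟨t, ht, rfl⟩ := Finset.mem_image.mp hx; exact (hMt.mem t ht).1
      · rw [hc1, Finset.card_image_of_injOn (fun t ht t' ht' h => hMt.i1 t ht t' ht' h),
          hcard]
    have himg2 : Mt.image c2 = S2 := by
      apply Finset.eq_of_subset_of_card_le
      · intro x hx; obtain ⟨t, ht, rfl⟩ := Finset.mem_image.mp hx; exact (hMt.mem t ht).2.1
      · rw [hc2, Finset.card_image_of_injOn (fun t ht t' ht' h => hMt.i2 t ht t' ht' h),
          hcard]
    have himg3 : Mt.image c3 = S3 := by
      apply Finset.eq_of_subset_of_card_le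
      · intro x hx; obtain ⟨t, ht, rfl⟩ := Finset.mem_image.mp hx
        exact (hMt.mem t ht).2.2.1
      · rw [hc3, Finset.card_image_of_injOn (fun t ht t' ht' h => hMt.i3 t ht t' ht' h),
          hcard]
    have himg4 : Mt.image c4 = S4 := by
      apply Finset.eq_of_subset_of_card_le
      · intro x hx; obtain ⟨t, ht, rfl⟩ := Finset.mem_image.mp hx
        exact (hMt.mem t ht).2.2.2.1
      · rw [hc4, Finset.card_image_of_injOn (fun t ht t' ht' h => hMt.i4 t ht t' ht' h),
          hcard]
    intro v hv
    simp only [Finset.mem_union] at hv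
    rcases hv with ((hv | hv) | hv) | hv
    · obtain ⟨t, ht, rfl⟩ := Finset.mem_image.mp (himg1 ▸ hv)
      exact ⟨quad t, Finset.mem_image_of_mem _ ht, by simp [hquad]⟩
    · obtain ⟨t, ht, rfl⟩ := Finset.mem_image.mp (himg2 ▸ hv)
      exact ⟨quad t, Finset.mem_image_of_mem _ ht, by simp [hquad]⟩
    · obtain ⟨t, ht, rfl⟩ := Finset.mem_image.mp (himg3 ▸ hv)
      exact ⟨quad t, Finset.mem_image_of_mem _ ht, by simp [hquad]⟩
    · obtain ⟨t, ht, rfl⟩ := Finset.mem_image.mp (himg4 ▸ hv)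
      exact ⟨quad t, Finset.mem_image_of_mem _ ht, by simp [hquad]⟩


lemma mem_H13 (V1 V2 V3 V4 W2 W3 W4 : Finset α)
    (d12 : Disjoint V1 V2) (d13 : Disjoint V1 V3) (d14 : Disjoint V1 V4)
    (d23 : Disjoint V2 V3) (d24 : Disjoint V2 V4) (d34 : Disjoint V3 V4)
    {a b c d : α} (ha : a ∈ V1) (hb : b ∈ V2) (hc : c ∈ V3) (hd : d ∈ V4)
    (hw : b ∈ W2 ∨ c ∈ W3 ∨ d ∈ W4)
    (hu : b ∈ V2 \ W2 ∨ c ∈ V3 \ W3 ∨ d ∈ V4 \ W4) :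
    ({a, b, c, d} : Finset α) ∈ H13edges V1 V2 V3 V4 W2 W3 W4 := by
  have h1 : ({a, b, c, d} : Finset α) ∩ V1 = {a} := by
    ext x
    simp only [Finset.mem_inter, Finset.mem_insert, Finset.mem_singleton]
    constructor
    · rintro ⟨(rfl|rfl|rfl|rfl), hx⟩
      · rfl
      · exact absurd hx (Finset.disjoint_right.mp d12 hb)
      · exact absurd hx (Finset.disjoint_right.mp d13 hc)
      · exact absurd hx (Finset.disjoint_right.mp d14 hd)
    · rintro rfl; exact ⟨Or.inl rfl, ha⟩
  have h2 : ({a, b, c, d} : Finset α) ∩ V2 = {b} := by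
    ext x
    simp only [Finset.mem_inter, Finset.mem_insert, Finset.mem_singleton]
    constructor
    · rintro ⟨(rfl|rfl|rfl|rfl), hx⟩
      · exact absurd hx (Finset.disjoint_left.mp d12 ha)
      · rfl
      · exact absurd hx (Finset.disjoint_right.mp d23 hc)
      · exact absurd hx (Finset.disjoint_right.mp d24 hd)
    · rintro rfl; exact ⟨Or.inr (Or.inl rfl), hb⟩
  have h3 : ({a, b, c, d} : Finset α) ∩ V3 = {c} := by
    ext x
    simp only [Finset.mem_inter, Finset.mem_insert, Finset.mem_singleton]
    constructor
    · rintro ⟨(rfl|rfl|rfl|rfl), hx⟩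
      · exact absurd hx (Finset.disjoint_left.mp d13 ha)
      · exact absurd hx (Finset.disjoint_left.mp d23 hb)
      · rfl
      · exact absurd hx (Finset.disjoint_right.mp d34 hd)
    · rintro rfl; exact ⟨Or.inr (Or.inr (Or.inl rfl)), hc⟩
  have h4 : ({a, b, c, d} : Finset α) ∩ V4 = {d} := by
    ext x
    simp only [Finset.mem_inter, Finset.mem_insert, Finset.mem_singleton]
    constructor
    · rintro ⟨(rfl|rfl|rfl|rfl), hx⟩
      · exact absurd hx (Finset.disjoint_left.mp d14 ha)
      · exact absurd hx (Finset.disjoint_left.mp d24 hb)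
      · exact absurd hx (Finset.disjoint_left.mp d34 hc)
      · rfl
    · rintro rfl; exact ⟨Or.inr (Or.inr (Or.inr rfl)), hd⟩
  refine Finset.mem_filter.mpr ⟨Finset.mem_powerset.mpr ?_, ?_, ?_, ?_, ?_, ?_, ?_⟩
  · intro x hx
    simp only [Finset.mem_insert, Finset.mem_singleton] at hx
    simp only [Finset.mem_union]
    rcases hx with rfl|rfl|rfl|rfl
    · exact Or.inl (Or.inl (Or.inl ha))
    · exact Or.inl (Or.inl (Or.inr hb))
    · exact Or.inl (Or.inr hc)
    · exact Or.inr hd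
  · rw [h1]; exact Finset.card_singleton a
  · rw [h2]; exact Finset.card_singleton b
  · rw [h3]; exact Finset.card_singleton c
  · rw [h4]; exact Finset.card_singleton d
  · rcases hw with h|h|h
    · exact ⟨b, Finset.mem_inter.mpr ⟨by simp, Finset.mem_union.mpr
        (Or.inl (Finset.mem_union.mpr (Or.inl h)))⟩⟩
    · exact ⟨c, Finset.mem_inter.mpr ⟨by simp, Finset.mem_union.mpr
        (Or.inl (Finset.mem_union.mpr (Or.inr h)))⟩⟩
    · exact ⟨d, Finset.mem_inter.mpr ⟨by simp, Finset.mem_union.mpr (Or.inr h)⟩⟩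
  · rcases hu with h|h|h
    · exact ⟨b, Finset.mem_inter.mpr ⟨by simp, Finset.mem_union.mpr
        (Or.inl (Finset.mem_union.mpr (Or.inl h)))⟩⟩
    · exact ⟨c, Finset.mem_inter.mpr ⟨by simp, Finset.mem_union.mpr
        (Or.inl (Finset.mem_union.mpr (Or.inr h)))⟩⟩
    · exact ⟨d, Finset.mem_inter.mpr ⟨by simp, Finset.mem_union.mpr (Or.inr h)⟩⟩

lemma card3 {P Q T : Finset α} (dPQ : Disjoint P Q) (dPT : Disjoint P T)
    (dQT : Disjoint Q T) {x y z : α} (hx : x ∈ P) (hy : y ∈ Q) (hz : z ∈ T) :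
    ({x, y, z} : Finset α).card = 3 := by
  rw [Finset.card_insert_of_notMem, Finset.card_insert_of_notMem,
    Finset.card_singleton]
  · simp only [Finset.mem_singleton]
    exact fun h => Finset.disjoint_left.mp dQT hy (h.symm ▸ hz)
  · simp only [Finset.mem_insert, Finset.mem_singleton]
    rintro (h|h)
    · exact Finset.disjoint_left.mp dPQ hx (h.symm ▸ hy)
    · exact Finset.disjoint_left.mp dPT hx (h.symm ▸ hz)

lemma trip_inj {P Q T : Finset α} (dPQ : Disjoint P Q) (dPT : Disjoint P T)
    (dQT : Disjoint Q T) {x y z x' y' z' : α}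
    (hx : x ∈ P) (hy : y ∈ Q) (hz : z ∈ T)
    (hx' : x' ∈ P) (hy' : y' ∈ Q) (hz' : z' ∈ T)
    (h : ({x, y, z} : Finset α) = ({x', y', z'} : Finset α)) :
    x = x' ∧ y = y' ∧ z = z' := by
  have hmx : x ∈ ({x', y', z'} : Finset α) := h ▸ (by simp)
  have hmy : y ∈ ({x', y', z'} : Finset α) := h ▸ (by simp)
  have hmz : z ∈ ({x', y', z'} : Finset α) := h ▸ (by simp)
  simp only [Finset.mem_insert, Finset.mem_singleton] at hmx hmy hmz
  refine ⟨?_, ?_, ?_⟩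
  · rcases hmx with h1|h1|h1
    · exact h1
    · exact absurd hx (fun hh => Finset.disjoint_left.mp dPQ hh (h1 ▸ hy'))
    · exact absurd hx (fun hh => Finset.disjoint_left.mp dPT hh (h1 ▸ hz'))
  · rcases hmy with h1|h1|h1
    · exact absurd hy (fun hh => Finset.disjoint_right.mp dPQ hh (h1 ▸ hx'))
    · exact h1
    · exact absurd hy (fun hh => Finset.disjoint_left.mp dQT hh (h1 ▸ hz'))
  · rcases hmz with h1|h1|h1
    · exact absurd hz (fun hh => Finset.disjoint_right.mp dPT hh (h1 ▸ hx'))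
    · exact absurd hz (fun hh => Finset.disjoint_right.mp dQT hh (h1 ▸ hy'))
    · exact h1

lemma missing_bound (V : Finset α) (Ew Hw : Finset (Finset α)) (v : α)
    (P Q T : Finset α)
    (hmem : ∀ x ∈ P, ∀ y ∈ Q, ∀ z ∈ T,
      ({x, y, z} : Finset α) ⊆ V ∧ ({x, y, z} : Finset α).card = 3 ∧
        insert v ({x, y, z} : Finset α) ∈ Hw)
    (hinj : ∀ x ∈ P, ∀ y ∈ Q, ∀ z ∈ T, ∀ x' ∈ P, ∀ y' ∈ Q, ∀ z' ∈ T,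
      ({x, y, z} : Finset α) = ({x', y', z'} : Finset α) → x = x' ∧ y = y' ∧ z = z')
    (g : α × α × α → Finset α) [DecidablePred (fun t => g t ∉ Ew)]
    (hg : ∀ x ∈ P, ∀ y ∈ Q, ∀ z ∈ T, g (x, y, z) = insert v ({x, y, z} : Finset α)) :
    ((P ×ˢ Q ×ˢ T).filter (fun t => g t ∉ Ew)).card ≤
      (nbrs V Hw v \ nbrs V Ew v).card := by
  apply Finset.card_le_card_of_injOn (fun t => ({t.1, t.2.1, t.2.2} : Finset α))
  · intro t htm
    obtain ⟨htP, hcond⟩ := Finset.mem_filter.mp htm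
    simp only [Finset.mem_product] at htP
    obtain ⟨h1, h2, h3⟩ := htP
    obtain ⟨hsub, hcd, hH⟩ := hmem t.1 h1 t.2.1 h2 t.2.2 h3
    have hgt := hg t.1 h1 t.2.1 h2 t.2.2 h3
    refine Finset.mem_sdiff.mpr ⟨?_, ?_⟩
    · exact Finset.mem_filter.mpr ⟨Finset.mem_powerset.mpr hsub, hcd, hH⟩
    · intro hcon
      have hE := (Finset.mem_filter.mp hcon).2.2
      exact hcond (by rw [hgt]; exact hE)
  · intro t ht t' ht' h
    have htP := (Finset.mem_filter.mp ht).1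
    have htP' := (Finset.mem_filter.mp ht').1
    simp only [Finset.mem_coe, Finset.mem_filter, Finset.mem_product] at ht ht'
    obtain ⟨⟨h1, h2, h3⟩, -⟩ := ht
    obtain ⟨⟨h1', h2', h3'⟩, -⟩ := ht'
    obtain ⟨e1, e2, e3⟩ := hinj t.1 h1 t.2.1 h2 t.2.2 h3 t'.1 h1' t'.2.1 h2' t'.2.2 h3' h
    exact Prod.ext e1 (Prod.ext e2 e3)


lemma dmono {A B X Y : Finset α} (hA : A ⊆ X) (hB : B ⊆ Y) (h : Disjoint X Y) :
    Disjoint A B := h.mono hA hB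

lemma disj_of_subset_sdiff {A B C : Finset α} (h : B ⊆ C \ A) : Disjoint A B := by
  rw [Finset.disjoint_right]
  intro x hx
  exact (Finset.mem_sdiff.mp (h hx)).2

lemma disjoint_quadunion {A B C D A' B' C' D' : Finset α}
    (h1 : Disjoint A A') (h2 : Disjoint A B') (h3 : Disjoint A C') (h4 : Disjoint A D')
    (h5 : Disjoint B A') (h6 : Disjoint B B') (h7 : Disjoint B C') (h8 : Disjoint B D')
    (h9 : Disjoint C A') (h10 : Disjoint C B') (h11 : Disjoint C C') (h12 : Disjoint C D')
    (h13 : Disjoint D A') (h14 : Disjoint D B') (h15 : Disjoint D C')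
    (h16 : Disjoint D D') :
    Disjoint (A ∪ B ∪ C ∪ D) (A' ∪ B' ∪ C' ∪ D') := by
  simp only [Finset.disjoint_union_left, Finset.disjoint_union_right]
  tauto

lemma numeric {c d m : ℕ} {a : ℝ} (hm : 1 ≤ m) (h1 : c ≤ d)
    (h2 : (d : ℝ) ≤ a * ((3 * m : ℕ) : ℝ) ^ 3) (h3 : a < 1 / 27000) :
    1000 * c ≤ m ^ 3 := by
  have hmr : (0:ℝ) < (m:ℝ)^3 := by positivity
  have hkey : ((1000 * c : ℕ) : ℝ) < ((m ^ 3 : ℕ) : ℝ) := by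
    push_cast at h2 ⊢
    have h2' : (d:ℝ) ≤ 27 * (a * (m:ℝ)^3) := by
      rw [show (27:ℝ) * (a * (m:ℝ)^3) = a * (3*(m:ℝ))^3 by ring]
      exact h2
    have hF : a * (m:ℝ)^3 < (1/27000) * (m:ℝ)^3 := mul_lt_mul_of_pos_right h3 hmr
    have hc : (c:ℝ) ≤ (d:ℝ) := by exact_mod_cast h1
    linarith
  exact le_of_lt (by exact_mod_cast hkey)

section DEG

variable (V1 V2 V3 V4 W2 W3 W4 : Finset α) (E : Finset (Finset α))

lemma deg1 (d12 : Disjoint V1 V2) (d13 : Disjoint V1 V3) (d14 : Disjoint V1 V4)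
    (d23 : Disjoint V2 V3) (d24 : Disjoint V2 V4) (d34 : Disjoint V3 V4)
    (P Q T : Finset α) (hP : P ⊆ V2) (hQ : Q ⊆ V3) (hT : T ⊆ V4)
    (v : α) (hv : v ∈ V1)
    (hw : ∀ x ∈ P, ∀ y ∈ Q, ∀ z ∈ T, x ∈ W2 ∨ y ∈ W3 ∨ z ∈ W4)
    (hu : ∀ x ∈ P, ∀ y ∈ Q, ∀ z ∈ T, x ∈ V2 \ W2 ∨ y ∈ V3 \ W3 ∨ z ∈ V4 \ W4) :
    ((P ×ˢ Q ×ˢ T).filter (fun t => ({v, t.1, t.2.1, t.2.2} : Finset α) ∉ E)).card ≤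
      (nbrs (V1 ∪ V2 ∪ V3 ∪ V4) (H13edges V1 V2 V3 V4 W2 W3 W4) v \
        nbrs (V1 ∪ V2 ∪ V3 ∪ V4) E v).card := by
  apply missing_bound (V1 ∪ V2 ∪ V3 ∪ V4) E (H13edges V1 V2 V3 V4 W2 W3 W4) v P Q T
  · intro x hx y hy z hz
    refine ⟨?_, card3 (dmono hP hQ d23) (dmono hP hT d24) (dmono hQ hT d34) hx hy hz, ?_⟩
    · intro w hw'
      simp only [Finset.mem_insert, Finset.mem_singleton] at hw'
      simp only [Finset.mem_union]
      rcases hw' with rfl|rfl|rfl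
      · exact Or.inl (Or.inl (Or.inr (hP hx)))
      · exact Or.inl (Or.inr (hQ hy))
      · exact Or.inr (hT hz)
    · exact mem_H13 V1 V2 V3 V4 W2 W3 W4 d12 d13 d14 d23 d24 d34 hv (hP hx) (hQ hy)
        (hT hz) (hw x hx y hy z hz) (hu x hx y hy z hz)
  · intro x hx y hy z hz x' hx' y' hy' z' hz' h
    exact trip_inj (dmono hP hQ d23) (dmono hP hT d24) (dmono hQ hT d34)
      hx hy hz hx' hy' hz' h
  · intro x _ y _ z _
    rfl

lemma deg2 (d12 : Disjoint V1 V2) (d13 : Disjoint V1 V3) (d14 : Disjoint V1 V4)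
    (d23 : Disjoint V2 V3) (d24 : Disjoint V2 V4) (d34 : Disjoint V3 V4)
    (P Q T : Finset α) (hP : P ⊆ V1) (hQ : Q ⊆ V3) (hT : T ⊆ V4)
    (v : α) (hv : v ∈ V2)
    (hw : ∀ x ∈ P, ∀ y ∈ Q, ∀ z ∈ T, v ∈ W2 ∨ y ∈ W3 ∨ z ∈ W4)
    (hu : ∀ x ∈ P, ∀ y ∈ Q, ∀ z ∈ T, v ∈ V2 \ W2 ∨ y ∈ V3 \ W3 ∨ z ∈ V4 \ W4) :
    ((P ×ˢ Q ×ˢ T).filter (fun t => ({t.1, v, t.2.1, t.2.2} : Finset α) ∉ E)).card ≤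
      (nbrs (V1 ∪ V2 ∪ V3 ∪ V4) (H13edges V1 V2 V3 V4 W2 W3 W4) v \
        nbrs (V1 ∪ V2 ∪ V3 ∪ V4) E v).card := by
  apply missing_bound (V1 ∪ V2 ∪ V3 ∪ V4) E (H13edges V1 V2 V3 V4 W2 W3 W4) v P Q T
  · intro x hx y hy z hz
    refine ⟨?_, card3 (dmono hP hQ d13) (dmono hP hT d14) (dmono hQ hT d34) hx hy hz, ?_⟩
    · intro w hw'
      simp only [Finset.mem_insert, Finset.mem_singleton] at hw'
      simp only [Finset.mem_union]
      rcases hw' with rfl|rfl|rfl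
      · exact Or.inl (Or.inl (Or.inl (hP hx)))
      · exact Or.inl (Or.inr (hQ hy))
      · exact Or.inr (hT hz)
    · rw [Finset.insert_comm v x]
      exact mem_H13 V1 V2 V3 V4 W2 W3 W4 d12 d13 d14 d23 d24 d34 (hP hx) hv (hQ hy)
        (hT hz) (hw x hx y hy z hz) (hu x hx y hy z hz)
  · intro x hx y hy z hz x' hx' y' hy' z' hz' h
    exact trip_inj (dmono hP hQ d13) (dmono hP hT d14) (dmono hQ hT d34)
      hx hy hz hx' hy' hz' h
  · intro x _ y _ z _
    exact Finset.insert_comm x v {y, z}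

lemma deg3 (d12 : Disjoint V1 V2) (d13 : Disjoint V1 V3) (d14 : Disjoint V1 V4)
    (d23 : Disjoint V2 V3) (d24 : Disjoint V2 V4) (d34 : Disjoint V3 V4)
    (P Q T : Finset α) (hP : P ⊆ V1) (hQ : Q ⊆ V2) (hT : T ⊆ V4)
    (v : α) (hv : v ∈ V3)
    (hw : ∀ x ∈ P, ∀ y ∈ Q, ∀ z ∈ T, y ∈ W2 ∨ v ∈ W3 ∨ z ∈ W4)
    (hu : ∀ x ∈ P, ∀ y ∈ Q, ∀ z ∈ T, y ∈ V2 \ W2 ∨ v ∈ V3 \ W3 ∨ z ∈ V4 \ W4) :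
    ((P ×ˢ Q ×ˢ T).filter (fun t => ({t.1, t.2.1, v, t.2.2} : Finset α) ∉ E)).card ≤
      (nbrs (V1 ∪ V2 ∪ V3 ∪ V4) (H13edges V1 V2 V3 V4 W2 W3 W4) v \
        nbrs (V1 ∪ V2 ∪ V3 ∪ V4) E v).card := by
  apply missing_bound (V1 ∪ V2 ∪ V3 ∪ V4) E (H13edges V1 V2 V3 V4 W2 W3 W4) v P Q T
  · intro x hx y hy z hz
    refine ⟨?_, card3 (dmono hP hQ d12) (dmono hP hT d14) (dmono hQ hT d24) hx hy hz, ?_⟩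
    · intro w hw'
      simp only [Finset.mem_insert, Finset.mem_singleton] at hw'
      simp only [Finset.mem_union]
      rcases hw' with rfl|rfl|rfl
      · exact Or.inl (Or.inl (Or.inl (hP hx)))
      · exact Or.inl (Or.inl (Or.inr (hQ hy)))
      · exact Or.inr (hT hz)
    · rw [Finset.insert_comm v x, Finset.insert_comm v y]
      exact mem_H13 V1 V2 V3 V4 W2 W3 W4 d12 d13 d14 d23 d24 d34 (hP hx) (hQ hy) hv
        (hT hz) (hw x hx y hy z hz) (hu x hx y hy z hz)
  · intro x hx y hy z hz x' hx' y' hy' z' hz' h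
    exact trip_inj (dmono hP hQ d12) (dmono hP hT d14) (dmono hQ hT d24)
      hx hy hz hx' hy' hz' h
  · intro x _ y _ z _
    rw [Finset.insert_comm v x, Finset.insert_comm v y]

lemma deg4 (d12 : Disjoint V1 V2) (d13 : Disjoint V1 V3) (d14 : Disjoint V1 V4)
    (d23 : Disjoint V2 V3) (d24 : Disjoint V2 V4) (d34 : Disjoint V3 V4)
    (P Q T : Finset α) (hP : P ⊆ V1) (hQ : Q ⊆ V2) (hT : T ⊆ V3)
    (v : α) (hv : v ∈ V4)
    (hw : ∀ x ∈ P, ∀ y ∈ Q, ∀ z ∈ T, y ∈ W2 ∨ z ∈ W3 ∨ v ∈ W4)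
    (hu : ∀ x ∈ P, ∀ y ∈ Q, ∀ z ∈ T, y ∈ V2 \ W2 ∨ z ∈ V3 \ W3 ∨ v ∈ V4 \ W4) :
    ((P ×ˢ Q ×ˢ T).filter (fun t => ({t.1, t.2.1, t.2.2, v} : Finset α) ∉ E)).card ≤
      (nbrs (V1 ∪ V2 ∪ V3 ∪ V4) (H13edges V1 V2 V3 V4 W2 W3 W4) v \
        nbrs (V1 ∪ V2 ∪ V3 ∪ V4) E v).card := by
  apply missing_bound (V1 ∪ V2 ∪ V3 ∪ V4) E (H13edges V1 V2 V3 V4 W2 W3 W4) v P Q T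
  · intro x hx y hy z hz
    refine ⟨?_, card3 (dmono hP hQ d12) (dmono hP hT d13) (dmono hQ hT d23) hx hy hz, ?_⟩
    · intro w hw'
      simp only [Finset.mem_insert, Finset.mem_singleton] at hw'
      simp only [Finset.mem_union]
      rcases hw' with rfl|rfl|rfl
      · exact Or.inl (Or.inl (Or.inl (hP hx)))
      · exact Or.inl (Or.inl (Or.inr (hQ hy)))
      · exact Or.inl (Or.inr (hT hz))
    · rw [Finset.insert_comm v x, Finset.insert_comm v y, Finset.pair_comm v z]
      exact mem_H13 V1 V2 V3 V4 W2 W3 W4 d12 d13 d14 d23 d24 d34 (hP hx) (hQ hy)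
        (hT hz) hv (hw x hx y hy z hz) (hu x hx y hy z hz)
  · intro x hx y hy z hz x' hx' y' hy' z' hz' h
    exact trip_inj (dmono hP hQ d12) (dmono hP hT d13) (dmono hQ hT d23)
      hx hy hz hx' hy' hz' h
  · intro x _ y _ z _
    rw [Finset.insert_comm v x, Finset.insert_comm v y, Finset.pair_comm v z]

end DEG

end PMaux


open PMaux

/-- For every sufficiently small `α > 0` there is `n0` such that for all
`n ≥ n0` divisible by `3`: if `H` is a 4-partite 4-graph with classes of size
`n` and every vertex of `H` is `α`-good with respect to `H'₁,₃(n)` (for a fixed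
choice of the partition sets `Wi`), then `H` has a perfect matching. -/
theorem good_vertices_perfect_matching :
    ∃ a0 : ℝ, 0 < a0 ∧ ∀ a : ℝ, 0 < a → a < a0 →
    ∃ n0 : ℕ, ∀ n : ℕ, n0 ≤ n → 3 ∣ n →
    ∀ (α : Type) [DecidableEq α], ∀ V1 V2 V3 V4 W2 W3 W4 : Finset α,
      Disjoint V1 V2 → Disjoint V1 V3 → Disjoint V1 V4 →
      Disjoint V2 V3 → Disjoint V2 V4 → Disjoint V3 V4 →
      V1.card = n → V2.card = n → V3.card = n → V4.card = n →
      W2 ⊆ V2 → W3 ⊆ V3 → W4 ⊆ V4 →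
      W2.card = n / 3 → W3.card = n / 3 → W4.card = n / 3 →
      ∀ E : Finset (Finset α),
        IsPartite4 V1 V2 V3 V4 E →
        (∀ v ∈ V1 ∪ V2 ∪ V3 ∪ V4,
          ((nbrs (V1 ∪ V2 ∪ V3 ∪ V4) (H13edges V1 V2 V3 V4 W2 W3 W4) v \
              nbrs (V1 ∪ V2 ∪ V3 ∪ V4) E v).card : ℝ) ≤ a * n ^ 3) →
        ∃ M : Finset (Finset α),
          M ⊆ E ∧
          (∀ e ∈ M, ∀ f ∈ M, e ≠ f → Disjoint e f) ∧
          (∀ v ∈ V1 ∪ V2 ∪ V3 ∪ V4, ∃ e ∈ M, v ∈ e) := by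
  refine ⟨1/27000, by norm_num, fun a ha ha0 => ⟨300, ?_⟩⟩
  intro n hn hdvd α instDE V1 V2 V3 V4 W2 W3 W4 d12 d13 d14 d23 d24 d34
    hV1 hV2 hV3 hV4 hW2V hW3V hW4V hW2c hW3c hW4c E hE hgood
  obtain ⟨m, rfl⟩ : ∃ m, n = 3 * m := ⟨n / 3, by omega⟩
  have hm : 100 ≤ m := by omega
  have hm1 : 1 ≤ m := by omega
  have hW2m : W2.card = m := by rw [hW2c]; omega
  have hW3m : W3.card = m := by rw [hW3c]; omega
  have hW4m : W4.card = m := by rw [hW4c]; omega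
  -- partition V1
  obtain ⟨A2, hA2V, hA2c⟩ := Finset.exists_subset_card_eq
    (s := V1) (n := m) (by rw [hV1]; omega)
  obtain ⟨A3, hA3s, hA3c⟩ := Finset.exists_subset_card_eq
    (s := V1 \ A2) (n := m) (by rw [Finset.card_sdiff_of_subset hA2V, hV1, hA2c]; omega)
  set A4 := (V1 \ A2) \ A3 with hA4def
  have hA4c : A4.card = m := by
    rw [hA4def, Finset.card_sdiff_of_subset hA3s, Finset.card_sdiff_of_subset hA2V, hV1, hA3c, hA2c]; omega
  have hA3V : A3 ⊆ V1 := hA3s.trans Finset.sdiff_subset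
  have hA4V : A4 ⊆ V1 := Finset.sdiff_subset.trans Finset.sdiff_subset
  have dA23 : Disjoint A2 A3 := disj_of_subset_sdiff hA3s
  have dA24 : Disjoint A2 A4 :=
    disj_of_subset_sdiff (show A4 ⊆ V1 \ A2 from Finset.sdiff_subset)
  have dA34 : Disjoint A3 A4 := disj_of_subset_sdiff (Finset.Subset.refl _)
  have hUV1 : A2 ∪ A3 ∪ A4 = V1 := by
    rw [Finset.union_assoc, Finset.union_sdiff_of_subset hA3s,
      Finset.union_sdiff_of_subset hA2V]
  -- partition V2
  have hU2c : (V2 \ W2).card = 2 * m := by rw [Finset.card_sdiff_of_subset hW2V, hV2, hW2m]; omega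
  obtain ⟨Q2, hQ2s, hQ2c⟩ := Finset.exists_subset_card_eq
    (s := V2 \ W2) (n := m) (by rw [hU2c]; omega)
  set R2 := (V2 \ W2) \ Q2 with hR2def
  have hR2c : R2.card = m := by
    rw [hR2def, Finset.card_sdiff_of_subset hQ2s, hU2c, hQ2c]; omega
  have hQ2V : Q2 ⊆ V2 := hQ2s.trans Finset.sdiff_subset
  have hR2U : R2 ⊆ V2 \ W2 := Finset.sdiff_subset
  have hR2V : R2 ⊆ V2 := hR2U.trans Finset.sdiff_subset
  have dW2Q2 : Disjoint W2 Q2 := disj_of_subset_sdiff hQ2s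
  have dW2R2 : Disjoint W2 R2 := disj_of_subset_sdiff hR2U
  have dQ2R2 : Disjoint Q2 R2 := disj_of_subset_sdiff (Finset.Subset.refl _)
  have hUV2 : W2 ∪ Q2 ∪ R2 = V2 := by
    rw [Finset.union_assoc, Finset.union_sdiff_of_subset hQ2s,
      Finset.union_sdiff_of_subset hW2V]
  -- partition V3
  have hU3c : (V3 \ W3).card = 2 * m := by rw [Finset.card_sdiff_of_subset hW3V, hV3, hW3m]; omega
  obtain ⟨P3, hP3s, hP3c⟩ := Finset.exists_subset_card_eq
    (s := V3 \ W3) (n := m) (by rw [hU3c]; omega)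
  set R3 := (V3 \ W3) \ P3 with hR3def
  have hR3c : R3.card = m := by
    rw [hR3def, Finset.card_sdiff_of_subset hP3s, hU3c, hP3c]; omega
  have hP3V : P3 ⊆ V3 := hP3s.trans Finset.sdiff_subset
  have hR3U : R3 ⊆ V3 \ W3 := Finset.sdiff_subset
  have hR3V : R3 ⊆ V3 := hR3U.trans Finset.sdiff_subset
  have dW3P3 : Disjoint W3 P3 := disj_of_subset_sdiff hP3s
  have dW3R3 : Disjoint W3 R3 := disj_of_subset_sdiff hR3U
  have dP3R3 : Disjoint P3 R3 := disj_of_subset_sdiff (Finset.Subset.refl _)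
  have hUV3 : W3 ∪ P3 ∪ R3 = V3 := by
    rw [Finset.union_assoc, Finset.union_sdiff_of_subset hP3s,
      Finset.union_sdiff_of_subset hW3V]
  -- partition V4
  have hU4c : (V4 \ W4).card = 2 * m := by rw [Finset.card_sdiff_of_subset hW4V, hV4, hW4m]; omega
  obtain ⟨P4, hP4s, hP4c⟩ := Finset.exists_subset_card_eq
    (s := V4 \ W4) (n := m) (by rw [hU4c]; omega)
  set Q4 := (V4 \ W4) \ P4 with hQ4def
  have hQ4c : Q4.card = m := by
    rw [hQ4def, Finset.card_sdiff_of_subset hP4s, hU4c, hP4c]; omega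
  have hP4V : P4 ⊆ V4 := hP4s.trans Finset.sdiff_subset
  have hQ4U : Q4 ⊆ V4 \ W4 := Finset.sdiff_subset
  have hQ4V : Q4 ⊆ V4 := hQ4U.trans Finset.sdiff_subset
  have dW4P4 : Disjoint W4 P4 := disj_of_subset_sdiff hP4s
  have dW4Q4 : Disjoint W4 Q4 := disj_of_subset_sdiff hQ4U
  have dP4Q4 : Disjoint P4 Q4 := disj_of_subset_sdiff (Finset.Subset.refl _)
  have hUV4 : W4 ∪ P4 ∪ Q4 = V4 := by
    rw [Finset.union_assoc, Finset.union_sdiff_of_subset hP4s,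
      Finset.union_sdiff_of_subset hW4V]
  -- membership in the big union
  have memU1 : ∀ {v : α}, v ∈ V1 → v ∈ V1 ∪ V2 ∪ V3 ∪ V4 := fun h => by
    simp only [Finset.mem_union]; tauto
  have memU2 : ∀ {v : α}, v ∈ V2 → v ∈ V1 ∪ V2 ∪ V3 ∪ V4 := fun h => by
    simp only [Finset.mem_union]; tauto
  have memU3 : ∀ {v : α}, v ∈ V3 → v ∈ V1 ∪ V2 ∪ V3 ∪ V4 := fun h => by
    simp only [Finset.mem_union]; tauto
  have memU4 : ∀ {v : α}, v ∈ V4 → v ∈ V1 ∪ V2 ∪ V3 ∪ V4 := fun h => by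
    simp only [Finset.mem_union]; tauto
  -- the three systems
  obtain ⟨M2, hM2E, hM2sub, hM2dis, hM2cov⟩ := reduction A2 W2 P3 P4 E m hm
    (dmono hA2V hW2V d12) (dmono hA2V hP3V d13) (dmono hA2V hP4V d14)
    (dmono hW2V hP3V d23) (dmono hW2V hP4V d24) (dmono hP3V hP4V d34)
    hA2c hW2m hP3c hP4c
    (fun v hv => numeric hm1
      (deg1 V1 V2 V3 V4 W2 W3 W4 E d12 d13 d14 d23 d24 d34 W2 P3 P4
        hW2V hP3V hP4V v (hA2V hv)
        (fun x hx y hy z hz => Or.inl hx)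
        (fun x hx y hy z hz => Or.inr (Or.inl (hP3s hy))))
      (hgood v (memU1 (hA2V hv))) ha0)
    (fun v hv => numeric hm1
      (deg2 V1 V2 V3 V4 W2 W3 W4 E d12 d13 d14 d23 d24 d34 A2 P3 P4
        hA2V hP3V hP4V v (hW2V hv)
        (fun x hx y hy z hz => Or.inl hv)
        (fun x hx y hy z hz => Or.inr (Or.inl (hP3s hy))))
      (hgood v (memU2 (hW2V hv))) ha0)
    (fun v hv => numeric hm1
      (deg3 V1 V2 V3 V4 W2 W3 W4 E d12 d13 d14 d23 d24 d34 A2 W2 P4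
        hA2V hW2V hP4V v (hP3V hv)
        (fun x hx y hy z hz => Or.inl hy)
        (fun x hx y hy z hz => Or.inr (Or.inl (hP3s hv))))
      (hgood v (memU3 (hP3V hv))) ha0)
    (fun v hv => numeric hm1
      (deg4 V1 V2 V3 V4 W2 W3 W4 E d12 d13 d14 d23 d24 d34 A2 W2 P3
        hA2V hW2V hP3V v (hP4V hv)
        (fun x hx y hy z hz => Or.inl hy)
        (fun x hx y hy z hz => Or.inr (Or.inr (hP4s hv))))
      (hgood v (memU4 (hP4V hv))) ha0)
  obtain ⟨M3, hM3E, hM3sub, hM3dis, hM3cov⟩ := reduction A3 Q2 W3 Q4 E m hm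
    (dmono hA3V hQ2V d12) (dmono hA3V hW3V d13) (dmono hA3V hQ4V d14)
    (dmono hQ2V hW3V d23) (dmono hQ2V hQ4V d24) (dmono hW3V hQ4V d34)
    hA3c hQ2c hW3m hQ4c
    (fun v hv => numeric hm1
      (deg1 V1 V2 V3 V4 W2 W3 W4 E d12 d13 d14 d23 d24 d34 Q2 W3 Q4
        hQ2V hW3V hQ4V v (hA3V hv)
        (fun x hx y hy z hz => Or.inr (Or.inl hy))
        (fun x hx y hy z hz => Or.inl (hQ2s hx)))
      (hgood v (memU1 (hA3V hv))) ha0)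
    (fun v hv => numeric hm1
      (deg2 V1 V2 V3 V4 W2 W3 W4 E d12 d13 d14 d23 d24 d34 A3 W3 Q4
        hA3V hW3V hQ4V v (hQ2V hv)
        (fun x hx y hy z hz => Or.inr (Or.inl hy))
        (fun x hx y hy z hz => Or.inl (hQ2s hv)))
      (hgood v (memU2 (hQ2V hv))) ha0)
    (fun v hv => numeric hm1
      (deg3 V1 V2 V3 V4 W2 W3 W4 E d12 d13 d14 d23 d24 d34 A3 Q2 Q4
        hA3V hQ2V hQ4V v (hW3V hv)
        (fun x hx y hy z hz => Or.inr (Or.inl hv))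
        (fun x hx y hy z hz => Or.inl (hQ2s hy)))
      (hgood v (memU3 (hW3V hv))) ha0)
    (fun v hv => numeric hm1
      (deg4 V1 V2 V3 V4 W2 W3 W4 E d12 d13 d14 d23 d24 d34 A3 Q2 W3
        hA3V hQ2V hW3V v (hQ4V hv)
        (fun x hx y hy z hz => Or.inr (Or.inl hz))
        (fun x hx y hy z hz => Or.inl (hQ2s hy)))
      (hgood v (memU4 (hQ4V hv))) ha0)
  obtain ⟨M4, hM4E, hM4sub, hM4dis, hM4cov⟩ := reduction A4 R2 R3 W4 E m hm
    (dmono hA4V hR2V d12) (dmono hA4V hR3V d13) (dmono hA4V hW4V d14)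
    (dmono hR2V hR3V d23) (dmono hR2V hW4V d24) (dmono hR3V hW4V d34)
    hA4c hR2c hR3c hW4m
    (fun v hv => numeric hm1
      (deg1 V1 V2 V3 V4 W2 W3 W4 E d12 d13 d14 d23 d24 d34 R2 R3 W4
        hR2V hR3V hW4V v (hA4V hv)
        (fun x hx y hy z hz => Or.inr (Or.inr hz))
        (fun x hx y hy z hz => Or.inl (hR2U hx)))
      (hgood v (memU1 (hA4V hv))) ha0)
    (fun v hv => numeric hm1
      (deg2 V1 V2 V3 V4 W2 W3 W4 E d12 d13 d14 d23 d24 d34 A4 R3 W4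
        hA4V hR3V hW4V v (hR2V hv)
        (fun x hx y hy z hz => Or.inr (Or.inr hz))
        (fun x hx y hy z hz => Or.inl (hR2U hv)))
      (hgood v (memU2 (hR2V hv))) ha0)
    (fun v hv => numeric hm1
      (deg3 V1 V2 V3 V4 W2 W3 W4 E d12 d13 d14 d23 d24 d34 A4 R2 W4
        hA4V hR2V hW4V v (hR3V hv)
        (fun x hx y hy z hz => Or.inr (Or.inr hz))
        (fun x hx y hy z hz => Or.inr (Or.inl (hR3U hv))))
      (hgood v (memU3 (hR3V hv))) ha0)
    (fun v hv => numeric hm1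
      (deg4 V1 V2 V3 V4 W2 W3 W4 E d12 d13 d14 d23 d24 d34 A4 R2 R3
        hA4V hR2V hR3V v (hW4V hv)
        (fun x hx y hy z hz => Or.inr (Or.inr hv))
        (fun x hx y hy z hz => Or.inl (hR2U hy)))
      (hgood v (memU4 (hW4V hv))) ha0)
  -- cross-system disjointness
  have hd23 : Disjoint (A2 ∪ W2 ∪ P3 ∪ P4) (A3 ∪ Q2 ∪ W3 ∪ Q4) :=
    disjoint_quadunion dA23 (dmono hA2V hQ2V d12) (dmono hA2V hW3V d13)
      (dmono hA2V hQ4V d14) (dmono hW2V hA3V d12.symm) dW2Q2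
      (dmono hW2V hW3V d23) (dmono hW2V hQ4V d24) (dmono hP3V hA3V d13.symm)
      (dmono hP3V hQ2V d23.symm) dW3P3.symm (dmono hP3V hQ4V d34)
      (dmono hP4V hA3V d14.symm) (dmono hP4V hQ2V d24.symm)
      (dmono hP4V hW3V d34.symm) dP4Q4
  have hd24 : Disjoint (A2 ∪ W2 ∪ P3 ∪ P4) (A4 ∪ R2 ∪ R3 ∪ W4) :=
    disjoint_quadunion dA24 (dmono hA2V hR2V d12) (dmono hA2V hR3V d13)
      (dmono hA2V hW4V d14) (dmono hW2V hA4V d12.symm) dW2R2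
      (dmono hW2V hR3V d23) (dmono hW2V hW4V d24) (dmono hP3V hA4V d13.symm)
      (dmono hP3V hR2V d23.symm) dP3R3 (dmono hP3V hW4V d34)
      (dmono hP4V hA4V d14.symm) (dmono hP4V hR2V d24.symm)
      (dmono hP4V hR3V d34.symm) dW4P4.symm
  have hd34 : Disjoint (A3 ∪ Q2 ∪ W3 ∪ Q4) (A4 ∪ R2 ∪ R3 ∪ W4) :=
    disjoint_quadunion dA34 (dmono hA3V hR2V d12) (dmono hA3V hR3V d13)
      (dmono hA3V hW4V d14) (dmono hQ2V hA4V d12.symm) dQ2R2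
      (dmono hQ2V hR3V d23) (dmono hQ2V hW4V d24) (dmono hW3V hA4V d13.symm)
      (dmono hW3V hR2V d23.symm) dW3R3 (dmono hW3V hW4V d34)
      (dmono hQ4V hA4V d14.symm) (dmono hQ4V hR2V d24.symm)
      (dmono hQ4V hR3V d34.symm) dW4Q4.symm
  refine ⟨M2 ∪ M3 ∪ M4, ?_, ?_, ?_⟩
  · intro e he
    simp only [Finset.mem_union] at he
    rcases he with (he|he)|he
    · exact hM2E he
    · exact hM3E he
    · exact hM4E he
  · intro e he f hf hne
    simp only [Finset.mem_union] at he hf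
    rcases he with (he|he)|he <;> rcases hf with (hf|hf)|hf
    · exact hM2dis e he f hf hne
    · exact hd23.mono (hM2sub e he) (hM3sub f hf)
    · exact hd24.mono (hM2sub e he) (hM4sub f hf)
    · exact hd23.symm.mono (hM3sub e he) (hM2sub f hf)
    · exact hM3dis e he f hf hne
    · exact hd34.mono (hM3sub e he) (hM4sub f hf)
    · exact hd24.symm.mono (hM4sub e he) (hM2sub f hf)
    · exact hd34.symm.mono (hM4sub e he) (hM3sub f hf)
    · exact hM4dis e he f hf hne
  · intro v hv
    simp only [Finset.mem_union] at hv
    rcases hv with ((hv|hv)|hv)|hv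
    · rw [← hUV1] at hv
      simp only [Finset.mem_union] at hv
      rcases hv with (hv|hv)|hv
      · obtain ⟨e, heM, hev⟩ := hM2cov v (by simp only [Finset.mem_union]; tauto)
        exact ⟨e, by simp only [Finset.mem_union]; tauto, hev⟩
      · obtain ⟨e, heM, hev⟩ := hM3cov v (by simp only [Finset.mem_union]; tauto)
        exact ⟨e, by simp only [Finset.mem_union]; tauto, hev⟩
      · obtain ⟨e, heM, hev⟩ := hM4cov v (by simp only [Finset.mem_union]; tauto)
        exact ⟨e, by simp only [Finset.mem_union]; tauto, hev⟩
    · rw [← hUV2] at hv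
      simp only [Finset.mem_union] at hv
      rcases hv with (hv|hv)|hv
      · obtain ⟨e, heM, hev⟩ := hM2cov v (by simp only [Finset.mem_union]; tauto)
        exact ⟨e, by simp only [Finset.mem_union]; tauto, hev⟩
      · obtain ⟨e, heM, hev⟩ := hM3cov v (by simp only [Finset.mem_union]; tauto)
        exact ⟨e, by simp only [Finset.mem_union]; tauto, hev⟩
      · obtain ⟨e, heM, hev⟩ := hM4cov v (by simp only [Finset.mem_union]; tauto)
        exact ⟨e, by simp only [Finset.mem_union]; tauto, hev⟩
    · rw [← hUV3] at hv
      simp only [Finset.mem_union] at hv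
      rcases hv with (hv|hv)|hv
      · obtain ⟨e, heM, hev⟩ := hM3cov v (by simp only [Finset.mem_union]; tauto)
        exact ⟨e, by simp only [Finset.mem_union]; tauto, hev⟩
      · obtain ⟨e, heM, hev⟩ := hM2cov v (by simp only [Finset.mem_union]; tauto)
        exact ⟨e, by simp only [Finset.mem_union]; tauto, hev⟩
      · obtain ⟨e, heM, hev⟩ := hM4cov v (by simp only [Finset.mem_union]; tauto)
        exact ⟨e, by simp only [Finset.mem_union]; tauto, hev⟩
    · rw [← hUV4] at hv
      simp only [Finset.mem_union] at hv
      rcases hv with (hv|hv)|hv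
      · obtain ⟨e, heM, hev⟩ := hM4cov v (by simp only [Finset.mem_union]; tauto)
        exact ⟨e, by simp only [Finset.mem_union]; tauto, hev⟩
      · obtain ⟨e, heM, hev⟩ := hM2cov v (by simp only [Finset.mem_union]; tauto)
        exact ⟨e, by simp only [Finset.mem_union]; tauto, hev⟩
      · obtain ⟨e, heM, hev⟩ := hM3cov v (by simp only [Finset.mem_union]; tauto)
        exact ⟨e, by simp only [Finset.mem_union]; tauto, hev⟩
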